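/- Let R be a ring and I, J right ideals with R/I ≅ R/J as right R-modules. If J can be generated by n elements, then I can be generated by at most n+1 elements. -/
import Mathlib


/-- If `I`, `J` are right ideals of a ring `R` (submodules of `R` over `Rᵐᵒᵖ`)
with `R/I ≅ R/J` as right `R`-modules, and `J` is generated by `n` elements,
then `I` is generated by at most `n + 1` elements. -/
theorem stmt5 (R : Type*) [Ring R] (I J : Submodule Rᵐᵒᵖ R) (n : ℕ)
    (hiso : Nonempty ((R ⧸ I) ≃ₗ[Rᵐᵒᵖ] (R ⧸ J)))
    (hJ : ∃ f : Fin n → R, J = Submodule.span Rᵐᵒᵖ (Set.range f)) :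
    ∃ g : Fin (n + 1) → R, I = Submodule.span Rᵐᵒᵖ (Set.range g) := by
  obtain ⟨φ⟩ := hiso
  obtain ⟨f, hf⟩ := hJ
  obtain ⟨u, hu⟩ := Submodule.Quotient.mk_surjective J (φ (Submodule.Quotient.mk 1))
  obtain ⟨v, hv⟩ := Submodule.Quotient.mk_surjective I (φ.symm (Submodule.Quotient.mk 1))
  have key1 : ∀ r : R, φ (Submodule.Quotient.mk r) = Submodule.Quotient.mk (u * r) := by
    intro r
    have h1 : (Submodule.Quotient.mk r : R ⧸ I)
        = (MulOpposite.op r) • (Submodule.Quotient.mk 1 : R ⧸ I) := by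
      rw [← Submodule.Quotient.mk_smul]
      congr 1
      simp [op_smul_eq_mul]
    rw [h1, map_smul, ← hu, ← Submodule.Quotient.mk_smul]
    rfl
  have key2 : ∀ s : R, φ.symm (Submodule.Quotient.mk s) = Submodule.Quotient.mk (v * s) := by
    intro s
    have h1 : (Submodule.Quotient.mk s : R ⧸ J)
        = (MulOpposite.op s) • (Submodule.Quotient.mk 1 : R ⧸ J) := by
      rw [← Submodule.Quotient.mk_smul]
      congr 1
      simp [op_smul_eq_mul]
    rw [h1, map_smul, ← hv, ← Submodule.Quotient.mk_smul]
    rfl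
  have hvu : (1 : R) - v * u ∈ I := by
    rw [← Submodule.Quotient.mk_eq_zero, Submodule.Quotient.mk_sub]
    have : (Submodule.Quotient.mk (v * u) : R ⧸ I) = Submodule.Quotient.mk 1 := by
      rw [← key2 u, hu, LinearEquiv.symm_apply_apply]
    rw [this, sub_self]
  have hvJ : ∀ b : R, b ∈ J → v * b ∈ I := by
    intro b hb
    rw [← Submodule.Quotient.mk_eq_zero, ← key2 b,
      (Submodule.Quotient.mk_eq_zero J).mpr hb, map_zero]
  have huI : ∀ a : R, a ∈ I → u * a ∈ J := by
    intro a ha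
    rw [← Submodule.Quotient.mk_eq_zero, ← key1 a,
      (Submodule.Quotient.mk_eq_zero I).mpr ha, map_zero]
  refine ⟨Fin.cons (1 - v * u) (fun i => v * f i), le_antisymm ?_ ?_⟩
  · -- I ⊆ span
    intro a ha
    -- left multiplication by v is Rᵐᵒᵖ-linear
    let L : R →ₗ[Rᵐᵒᵖ] R :=
      { toFun := fun x => v * x
        map_add' := fun x y => mul_add v x y
        map_smul' := by
          intro m x
          simp only [MulOpposite.smul_eq_mul_unop, RingHom.id_apply, mul_assoc] }
    have hua : u * a ∈ J := huI a ha
    have h2 : v * (u * a) ∈ Submodule.map L J := Submodule.mem_map_of_mem hua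
    rw [hf, Submodule.map_span] at h2
    have hsub : L '' Set.range f ⊆
        Set.range (Fin.cons (1 - v * u) (fun i => v * f i) : Fin (n + 1) → R) := by
      rintro x ⟨y, ⟨i, rfl⟩, rfl⟩
      exact ⟨i.succ, by rw [Fin.cons_succ]; rfl⟩
    have h3 : v * (u * a) ∈
        Submodule.span Rᵐᵒᵖ (Set.range (Fin.cons (1 - v * u) (fun i => v * f i))) :=
      Submodule.span_mono hsub h2
    have h4 : (1 - v * u) * a ∈
        Submodule.span Rᵐᵒᵖ (Set.range (Fin.cons (1 - v * u) (fun i => v * f i))) := by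
      have hmem : (1 - v * u) ∈
          Submodule.span Rᵐᵒᵖ (Set.range (Fin.cons (1 - v * u) (fun i => v * f i))) :=
        Submodule.subset_span ⟨0, Fin.cons_zero _ _⟩
      have := Submodule.smul_mem _ (MulOpposite.op a) hmem
      rwa [op_smul_eq_mul] at this
    have heq : a = (1 - v * u) * a + v * (u * a) := by noncomm_ring
    rw [heq]
    exact Submodule.add_mem _ h4 h3
  · -- span ⊆ I
    rw [Submodule.span_le]
    rintro x ⟨i, rfl⟩
    refine Fin.cases ?_ ?_ i
    · rw [Fin.cons_zero]; exact hvu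
    · intro j
      rw [Fin.cons_succ]
      exact hvJ (f j) (hf ▸ Submodule.subset_span ⟨j, rfl⟩)
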